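/- Suppose H : (0,∞) → ℝ is bounded on every compact subset of (0,∞) and satisfies Assumption (DE) with parameter ρ for some ρ ∈ (0,∞). Then H(t) grows superlinearly: lim_{t→∞} H(t)/t = +∞. -/

import Mathlib

set_option maxHeartbeats 1000000


open Filter

/-- If `H` is bounded on compact subsets of `(0,∞)` and satisfies Assumption (DE) with a
parameter `ρ ∈ (0,∞)`, then `H(t)/t → ∞` as `t → ∞`. -/
theorem DE_superlinear (H : ℝ → ℝ) (ρ : ℝ) (hρ : 0 < ρ)
    (hbdd : ∀ K : Set ℝ, K ⊆ Set.Ioi 0 → IsCompact K → ∃ C : ℝ, ∀ t ∈ K, |H t| ≤ C)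
    (hDE : ∀ c ∈ Set.Ioo (0 : ℝ) 1,
      Tendsto (fun t => (H (c * t) - c * H t) / t) atTop (nhds (ρ * c * Real.log c))) :
    Tendsto (fun t => H t / t) atTop atTop := by
  have hlog2 : 0 < Real.log 2 := Real.log_pos one_lt_two
  set L : ℝ := ρ * (1/2) * Real.log (1/2) with hLdef
  set δ : ℝ → ℝ := fun s => (H ((1/2) * s) - (1/2) * H s) / s - L with hδdef
  have hδ0 : Tendsto δ atTop (nhds 0) := by
    have h := (hDE (1/2) (by norm_num)).sub_const L
    have he : ρ * (1/2) * Real.log (1/2) - L = 0 := by rw [hLdef]; ring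
    rw [he] at h
    exact h
  have hL2 : L = -(ρ * Real.log 2) / 2 := by
    rw [hLdef, one_div, Real.log_inv]; ring
  -- the basic doubling step
  have hstep : ∀ s : ℝ, 0 < s → H s = 2 * H (s/2) + ρ * Real.log 2 * s - 2 * s * δ s := by
    intro s hs
    have hs' : s ≠ 0 := ne_of_gt hs
    have hmul : δ s * s = H (s/2) - H s / 2 - L * s := by
      simp only [hδdef]
      rw [show (1/2 : ℝ) * s = s / 2 by ring]
      field_simp
    rw [hL2] at hmul
    nlinarith [hmul]
  -- iterated identity
  have key : ∀ n : ℕ, ∀ t : ℝ, 0 < t →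
      H t = 2^n * H (t / 2^n) + n * (ρ * Real.log 2) * t
        - 2 * t * ∑ k ∈ Finset.range n, δ (t / 2^k) := by
    intro n
    induction n with
    | zero => intro t ht; simp
    | succ n ih =>
      intro t ht
      have h2n : (0:ℝ) < 2^n := by positivity
      have h1 := ih t ht
      have h2 := hstep (t / 2^n) (by positivity)
      have e1 : t / 2^n / 2 = t / 2^(n+1) := by
        rw [pow_succ]; ring
      rw [e1] at h2
      rw [Finset.sum_range_succ, h1, h2]
      have h2n' : (2:ℝ)^n ≠ 0 := ne_of_gt h2n
      field_simp
      push_cast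
      ring
  -- uniform smallness of δ at infinity
  have hev : ∀ ε : ℝ, 0 < ε → ∃ T : ℝ, 1 ≤ T ∧ ∀ s, T ≤ s → |δ s| ≤ ε := by
    intro ε hε
    have h : Tendsto (fun s => |δ s|) atTop (nhds 0) := by
      simpa using hδ0.abs
    have h2 : ∀ᶠ s in atTop, |δ s| ≤ ε := h.eventually_le_const hε
    rcases eventually_atTop.1 h2 with ⟨T, hT⟩
    exact ⟨max T 1, le_max_right _ _, fun s hs => hT s (le_trans (le_max_left _ _) hs)⟩
  obtain ⟨T₀, hT₀1, hT₀⟩ := hev 1 one_pos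
  set B : ℝ := max T₀ 2 with hBdef
  have hB2 : (2:ℝ) ≤ B := le_max_right _ _
  have hBT : T₀ ≤ B := le_max_left _ _
  obtain ⟨C₀, hC₀⟩ := hbdd (Set.Icc (1/2) B)
    (fun x hx => by exact lt_of_lt_of_le (by norm_num) hx.1)
    isCompact_Icc
  set C₁ : ℝ := max C₀ 0 with hC₁def
  have hC₁0 : 0 ≤ C₁ := le_max_right _ _
  have hC₁ : ∀ x ∈ Set.Icc (1/2 : ℝ) B, |H x| ≤ C₁ :=
    fun x hx => le_trans (hC₀ x hx) (le_max_left _ _)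
  set M : ℝ := 2 * C₁ + |L| + 1 with hMdef
  have hM0 : 0 ≤ M := by positivity
  have hM : ∀ s : ℝ, 1 ≤ s → |δ s| ≤ M := by
    intro s hs
    by_cases hsT : T₀ ≤ s
    · have := hT₀ s hsT
      simp only [hMdef]
      have : (0:ℝ) ≤ |L| := abs_nonneg _
      linarith [hT₀ s hsT]
    · push_neg at hsT
      have hs0 : 0 < s := lt_of_lt_of_le one_pos hs
      have hx1 : (1/2 : ℝ) * s ∈ Set.Icc (1/2 : ℝ) B := by
        constructor
        · nlinarith
        · nlinarith
      have hx2 : s ∈ Set.Icc (1/2 : ℝ) B := by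
        constructor
        · linarith
        · linarith
      have h1 := hC₁ _ hx1
      have h2 := hC₁ _ hx2
      have habs : |δ s| ≤ |(H ((1/2) * s) - (1/2) * H s) / s| + |L| := by
        simp only [hδdef]
        exact abs_sub _ _
      have hnum : |H ((1/2) * s) - (1/2) * H s| ≤ 2 * C₁ := by
        calc |H ((1/2) * s) - (1/2) * H s| ≤ |H ((1/2)*s)| + |(1/2) * H s| := abs_sub _ _
          _ ≤ C₁ + C₁ := by
              rw [abs_mul]
              have : |(1/2 : ℝ)| = 1/2 := by norm_num
              nlinarith [abs_nonneg (H s)]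
          _ = 2 * C₁ := by ring
      have hdiv : |(H ((1/2) * s) - (1/2) * H s) / s| ≤ 2 * C₁ := by
        rw [abs_div, abs_of_pos hs0, div_le_iff₀ hs0]
        nlinarith
      simp only [hMdef]
      linarith
  -- main estimate
  rw [tendsto_atTop]
  intro A
  obtain ⟨T₁, hT₁1, hT₁⟩ := hev (ρ * Real.log 2 / 4) (by positivity)
  obtain ⟨m, hm⟩ : ∃ m : ℕ, T₁ ≤ (2:ℝ)^m := by
    obtain ⟨m, hm⟩ := pow_unbounded_of_one_lt T₁ (one_lt_two (α := ℝ))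
    exact ⟨m, hm.le⟩
  set P : ℝ := ρ * Real.log 2 / 2 with hPdef
  have hP : 0 < P := by positivity
  obtain ⟨N₀, hN₀⟩ : ∃ N : ℕ, A + C₁ + 2 * m * M ≤ N * P := by
    refine ⟨⌈(A + C₁ + 2*m*M)/P⌉₊, ?_⟩
    rw [← div_le_iff₀ hP]
    exact Nat.le_ceil _
  set N := max N₀ m with hNdef
  filter_upwards [eventually_ge_atTop ((2:ℝ)^N)] with t ht
  have h1le : (1:ℝ) ≤ (2:ℝ)^N := one_le_pow₀ one_le_two
  have ht1 : (1:ℝ) ≤ t := le_trans h1le ht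
  have ht0 : 0 < t := lt_of_lt_of_le one_pos ht1
  set n := Nat.log 2 ⌊t⌋₊ with hndef
  have hfl : (2:ℕ)^N ≤ ⌊t⌋₊ := Nat.le_floor (by push_cast; exact ht)
  have hfl0 : ⌊t⌋₊ ≠ 0 := by
    have : (1:ℕ) ≤ 2^N := Nat.one_le_two_pow
    omega
  have hNn : N ≤ n := (Nat.le_log_iff_pow_le one_lt_two hfl0).2 hfl
  have hmn : m ≤ n := le_trans (le_max_right _ _) hNn
  have h2nt : (2:ℝ)^n ≤ t := by
    have h := Nat.pow_log_le_self 2 hfl0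
    calc (2:ℝ)^n = ((2^n : ℕ) : ℝ) := by push_cast; ring
      _ ≤ (⌊t⌋₊ : ℝ) := by exact_mod_cast h
      _ ≤ t := Nat.floor_le ht0.le
  have ht2n : t ≤ (2:ℝ)^(n+1) := by
    have h1 : ⌊t⌋₊ < 2^(n+1) := Nat.lt_pow_succ_log_self one_lt_two _
    have h2 : t < (⌊t⌋₊:ℝ) + 1 := Nat.lt_floor_add_one t
    have h3 : (⌊t⌋₊:ℝ) + 1 ≤ ((2:ℕ)^(n+1) : ℝ) := by exact_mod_cast h1
    push_cast at h3
    linarith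
  have h2n : (0:ℝ) < 2^n := by positivity
  -- H(t/2^n) bounded
  have hq : t / 2^n ∈ Set.Icc (1/2 : ℝ) B := by
    constructor
    · rw [le_div_iff₀ h2n]; nlinarith
    · rw [div_le_iff₀ h2n]
      have : (2:ℝ)^(n+1) = 2 * 2^n := by rw [pow_succ]; ring
      nlinarith
  have hH1 : |H (t / 2^n)| ≤ C₁ := hC₁ _ hq
  have hterm1 : -C₁ ≤ 2^n * H (t / 2^n) / t := by
    have habs : |2^n * H (t / 2^n) / t| ≤ C₁ := by
      rw [abs_div, abs_mul, abs_of_pos h2n, abs_of_pos ht0, div_le_iff₀ ht0]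
      nlinarith [hH1, h2nt, hC₁0, abs_nonneg (H (t / 2^n))]
    linarith [neg_abs_le (2^n * H (t / 2^n) / t), abs_nonneg (2^n * H (t / 2^n) / t),
      neg_le_of_abs_le habs]
  -- sum bound
  have hsumb : |∑ k ∈ Finset.range n, δ (t / 2^k)| ≤ n * (ρ * Real.log 2 / 4) + m * M := by
    have hsplit : ∑ k ∈ Finset.range n, δ (t / 2^k)
        = ∑ k ∈ Finset.Ico 0 (n-m), δ (t / 2^k) + ∑ k ∈ Finset.Ico (n-m) n, δ (t / 2^k) := by
      rw [Finset.range_eq_Ico,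
        Finset.sum_Ico_consecutive _ (Nat.zero_le _) (Nat.sub_le n m)]
    have hb1 : ∑ k ∈ Finset.Ico 0 (n-m), |δ (t / 2^k)| ≤ (n - m : ℕ) * (ρ * Real.log 2 / 4) := by
      have := Finset.sum_le_card_nsmul (Finset.Ico 0 (n-m)) (fun k => |δ (t / 2^k)|)
        (ρ * Real.log 2 / 4) ?_
      · simpa [Nat.card_Ico, nsmul_eq_mul] using this
      · intro k hk
        simp only [Finset.mem_Ico] at hk
        have hkm : k + m < n := by omega
        apply hT₁
        rw [le_div_iff₀ (by positivity : (0:ℝ) < 2^k)]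
        calc T₁ * 2^k ≤ 2^m * 2^k := by
              have : (0:ℝ) < 2^k := by positivity
              nlinarith
          _ = (2:ℝ)^(m+k) := by rw [pow_add]
          _ ≤ (2:ℝ)^n := by
              apply pow_le_pow_right₀ one_le_two
              omega
          _ ≤ t := h2nt
    have hb2 : ∑ k ∈ Finset.Ico (n-m) n, |δ (t / 2^k)| ≤ (m : ℕ) * M := by
      have := Finset.sum_le_card_nsmul (Finset.Ico (n-m) n) (fun k => |δ (t / 2^k)|) M ?_
      · have hcard : (Finset.Ico (n-m) n).card = m := by
          rw [Nat.card_Ico]; omega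
        rw [hcard] at this
        simpa [nsmul_eq_mul] using this
      · intro k hk
        simp only [Finset.mem_Ico] at hk
        apply hM
        rw [le_div_iff₀ (by positivity : (0:ℝ) < 2^k)]
        calc (1:ℝ) * 2^k = 2^k := by ring
          _ ≤ (2:ℝ)^n := pow_le_pow_right₀ one_le_two hk.2.le
          _ ≤ t := h2nt
    calc |∑ k ∈ Finset.range n, δ (t / 2^k)|
        ≤ ∑ k ∈ Finset.range n, |δ (t / 2^k)| := Finset.abs_sum_le_sum_abs _ _
      _ = ∑ k ∈ Finset.Ico 0 (n-m), |δ (t / 2^k)| + ∑ k ∈ Finset.Ico (n-m) n, |δ (t / 2^k)| := by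
          rw [Finset.range_eq_Ico,
            Finset.sum_Ico_consecutive _ (Nat.zero_le _) (Nat.sub_le n m)]
      _ ≤ (n - m : ℕ) * (ρ * Real.log 2 / 4) + m * M := by
          gcongr
      _ ≤ n * (ρ * Real.log 2 / 4) + m * M := by
          have hc : ((n - m : ℕ) : ℝ) ≤ (n:ℝ) := by exact_mod_cast Nat.sub_le n m
          have hc2 : (0:ℝ) ≤ ρ * Real.log 2 / 4 := by positivity
          nlinarith [mul_le_mul_of_nonneg_right hc hc2]
  -- put it together
  have hHt : H t / t = 2^n * H (t / 2^n) / t + n * (ρ * Real.log 2)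
      - 2 * ∑ k ∈ Finset.range n, δ (t / 2^k) := by
    rw [key n t ht0]
    field_simp
  have hS := neg_le_of_abs_le hsumb
  have hS2 := le_of_abs_le hsumb
  have hnN : (N₀ : ℝ) ≤ (n : ℝ) := by
    have : N₀ ≤ n := le_trans (le_max_left _ _) hNn
    exact_mod_cast this
  have hnP : (N₀ : ℝ) * P ≤ (n : ℝ) * P := mul_le_mul_of_nonneg_right hnN hP.le
  have hPe : (n:ℝ) * P = (n:ℝ) * (ρ * Real.log 2) - 2 * ((n:ℝ) * (ρ * Real.log 2 / 4)) := by
    rw [hPdef]; ring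
  rw [hHt]
  have hmm : (2:ℝ) * ↑m * M = 2 * (↑m * M) := by ring
  nlinarith [hN₀, hnP, hPe, hterm1, hS2, hmm]
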